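/- Let E be a subspace of ℝ^d with the Euclidean inner product, let L:E→E^⊥ be a linear map into the orthogonal complement of E, and let F={u+Lu : u∈E} be the graph of L. Then ‖L‖/√(1+‖L‖²) ≤ dist(E,F) ≤ ‖L‖, where ‖L‖ is the operator norm of L. -/

import Mathlib

open scoped RealInnerProductSpace

noncomputable def subDist {N : ℕ} (E F : Submodule ℝ (EuclideanSpace ℝ (Fin N))) : ℝ :=
  max (sSup {r : ℝ | ∃ v ∈ E, ‖v‖ = 1 ∧ r = Metric.infDist v (F : Set (EuclideanSpace ℝ (Fin N)))})
      (sSup {r : ℝ | ∃ v ∈ F, ‖v‖ = 1 ∧ r = Metric.infDist v (E : Set (EuclideanSpace ℝ (Fin N)))})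

lemma infDist_add_of_orthogonal {d : ℕ} (E : Submodule ℝ (EuclideanSpace ℝ (Fin d)))
    {a b : EuclideanSpace ℝ (Fin d)} (ha : a ∈ E) (hb : b ∈ Eᗮ) :
    Metric.infDist (a + b) (E : Set (EuclideanSpace ℝ (Fin d))) = ‖b‖ := by
  refine le_antisymm ?_ ?_
  · have h := Metric.infDist_le_dist_of_mem
      (x := a + b) (s := (E : Set (EuclideanSpace ℝ (Fin d)))) ha
    simpa [dist_eq_norm] using h
  · rw [Metric.infDist_eq_iInf]
    haveI : Nonempty (E : Set (EuclideanSpace ℝ (Fin d))) := ⟨⟨0, E.zero_mem⟩⟩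
    refine le_ciInf fun w => ?_
    have hw : (w : EuclideanSpace ℝ (Fin d)) ∈ E := w.2
    have h0 : (inner ℝ (a - (w : EuclideanSpace ℝ (Fin d))) b : ℝ) = 0 :=
      Submodule.inner_right_of_mem_orthogonal (E.sub_mem ha hw) hb
    have hpy := norm_add_sq_eq_norm_sq_add_norm_sq_real h0
    have heq : dist (a + b) (w : EuclideanSpace ℝ (Fin d))
        = ‖(a - (w : EuclideanSpace ℝ (Fin d))) + b‖ := by
      rw [dist_eq_norm]; congr 1; abel
    rw [heq]
    nlinarith [norm_nonneg ((a - (w : EuclideanSpace ℝ (Fin d))) + b),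
      norm_nonneg (a - (w : EuclideanSpace ℝ (Fin d))), norm_nonneg b]

set_option maxHeartbeats 2000000 in
theorem dist_of_graph_of_linear_map {d : ℕ}
    (E : Submodule ℝ (EuclideanSpace ℝ (Fin d)))
    (L : E →L[ℝ] Eᗮ)
    (F : Submodule ℝ (EuclideanSpace ℝ (Fin d)))
    (hF : ∀ v : EuclideanSpace ℝ (Fin d), v ∈ F ↔
      ∃ u : E, v = (u : EuclideanSpace ℝ (Fin d)) + (L u : EuclideanSpace ℝ (Fin d))) :
    ‖L‖ / Real.sqrt (1 + ‖L‖ ^ 2) ≤ subDist E F ∧ subDist E F ≤ ‖L‖ := by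
  have hLnn : (0:ℝ) ≤ ‖L‖ := ContinuousLinearMap.opNorm_nonneg L
  set S1 := {r : ℝ | ∃ v ∈ E, ‖v‖ = 1 ∧ r = Metric.infDist v (F : Set (EuclideanSpace ℝ (Fin d)))}
  set S2 := {r : ℝ | ∃ v ∈ F, ‖v‖ = 1 ∧ r = Metric.infDist v (E : Set (EuclideanSpace ℝ (Fin d)))}
  have hub1 : ∀ r ∈ S1, r ≤ ‖L‖ := by
    rintro r ⟨v, hvE, hv1, rfl⟩
    set u : E := ⟨v, hvE⟩
    have hmem : v + (L u : EuclideanSpace ℝ (Fin d)) ∈ F := (hF _).2 ⟨u, rfl⟩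
    have h1 : Metric.infDist v (F : Set (EuclideanSpace ℝ (Fin d)))
        ≤ dist v (v + (L u : EuclideanSpace ℝ (Fin d))) :=
      Metric.infDist_le_dist_of_mem hmem
    have h2 : dist v (v + (L u : EuclideanSpace ℝ (Fin d))) = ‖L u‖ := by
      rw [dist_eq_norm]
      simp
    have h3 : ‖L u‖ ≤ ‖L‖ * ‖u‖ := L.le_opNorm u
    have h4 : ‖u‖ = 1 := hv1
    rw [h4, mul_one] at h3
    linarith
  have hub2 : ∀ r ∈ S2, r ≤ ‖L‖ := by
    rintro r ⟨v, hvF, hv1, rfl⟩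
    obtain ⟨u, rfl⟩ := (hF v).1 hvF
    have h0 : (inner ℝ (u : EuclideanSpace ℝ (Fin d)) (L u : EuclideanSpace ℝ (Fin d)) : ℝ) = 0 :=
      Submodule.inner_right_of_mem_orthogonal u.2 (L u).2
    have hpy := norm_add_sq_eq_norm_sq_add_norm_sq_real h0
    have hu_le : ‖(u : EuclideanSpace ℝ (Fin d))‖ ≤ 1 := by
      nlinarith [norm_nonneg (u : EuclideanSpace ℝ (Fin d)),
        norm_nonneg (L u : EuclideanSpace ℝ (Fin d))]
    have h1 : Metric.infDist ((u : EuclideanSpace ℝ (Fin d)) + (L u : EuclideanSpace ℝ (Fin d)))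
        (E : Set (EuclideanSpace ℝ (Fin d))) ≤ ‖(L u : EuclideanSpace ℝ (Fin d))‖ := by
      have := Metric.infDist_le_dist_of_mem
        (x := (u : EuclideanSpace ℝ (Fin d)) + (L u : EuclideanSpace ℝ (Fin d)))
        (s := (E : Set (EuclideanSpace ℝ (Fin d)))) u.2
      simpa [dist_eq_norm] using this
    have h3 : ‖L u‖ ≤ ‖L‖ * ‖u‖ := L.le_opNorm u
    have h4 : ‖L‖ * ‖u‖ ≤ ‖L‖ * 1 := by
      have : ‖u‖ ≤ 1 := hu_le
      exact mul_le_mul_of_nonneg_left this hLnn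
    have h5 : ‖(L u : EuclideanSpace ℝ (Fin d))‖ = ‖L u‖ := rfl
    rw [h5] at h1
    linarith
  have hsub_nonneg : 0 ≤ subDist E F := by
    refine le_trans (Real.sSup_nonneg fun r hr => ?_) (le_max_left _ _)
    obtain ⟨v, _, _, rfl⟩ := hr
    exact Metric.infDist_nonneg
  constructor
  · rcases eq_or_lt_of_le hLnn with h0 | hpos
    · rw [← h0]
      simpa using hsub_nonneg
    · have hL0 : L ≠ 0 := by
        intro h
        rw [h, ContinuousLinearMap.opNorm_zero] at hpos
        exact lt_irrefl 0 hpos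
      have hexu : ∃ u : E, L u ≠ 0 := by
        by_contra h
        push_neg at h
        exact hL0 (ContinuousLinearMap.ext fun u => by simp [h u])
      obtain ⟨u1, hu1⟩ := hexu
      have hu1' : u1 ≠ 0 := fun h => hu1 (by simp [h])
      haveI : Nontrivial E := nontrivial_of_ne u1 0 hu1'
      have hcs : IsCompact (Metric.sphere (0:E) 1) := isCompact_sphere 0 1
      have hne : (Metric.sphere (0:E) 1).Nonempty := by
        obtain ⟨x, hx⟩ := exists_norm_eq E zero_le_one
        exact ⟨x, by simpa [mem_sphere_zero_iff_norm] using hx⟩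
      obtain ⟨u₀, hu₀s, hmax'⟩ := hcs.exists_isMaxOn hne (L.continuous.norm.continuousOn)
      have hmax : ∀ x ∈ Metric.sphere (0:E) 1, ‖L x‖ ≤ ‖L u₀‖ := fun x hx => hmax' hx
      have hu₀ : ‖u₀‖ = 1 := mem_sphere_zero_iff_norm.1 hu₀s
      have hval : ‖L u₀‖ = ‖L‖ := by
        refine le_antisymm (by simpa [hu₀] using L.le_opNorm u₀) ?_
        refine L.opNorm_le_bound (norm_nonneg _) fun x => ?_
        rcases eq_or_ne x 0 with rfl | hx
        · simp
        · have hxn : ‖x‖ ≠ 0 := norm_ne_zero_iff.2 hx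
          have hy : (‖x‖⁻¹ • x) ∈ Metric.sphere (0:E) 1 := by
            rw [mem_sphere_zero_iff_norm, norm_smul, norm_inv,
              Real.norm_of_nonneg (norm_nonneg x)]
            exact inv_mul_cancel₀ hxn
          have := hmax _ hy
          rw [map_smul, norm_smul, norm_inv, Real.norm_of_nonneg (norm_nonneg x)] at this
          have hxpos : 0 < ‖x‖ := lt_of_le_of_ne (norm_nonneg x) (Ne.symm hxn)
          rw [mul_comm]
          calc ‖L x‖ = ‖x‖ * (‖x‖⁻¹ * ‖L x‖) := by
                rw [← mul_assoc, mul_inv_cancel₀ hxn, one_mul]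
            _ ≤ ‖x‖ * ‖L u₀‖ := by
                exact mul_le_mul_of_nonneg_left this (norm_nonneg x)
      set c := Real.sqrt (1 + ‖L‖ ^ 2) with hc_def
      have hc : 0 < c := Real.sqrt_pos.2 (by positivity)
      set w : EuclideanSpace ℝ (Fin d) :=
        (u₀ : EuclideanSpace ℝ (Fin d)) + (L u₀ : EuclideanSpace ℝ (Fin d)) with hw_def
      have h0 : (inner ℝ (u₀ : EuclideanSpace ℝ (Fin d)) (L u₀ : EuclideanSpace ℝ (Fin d)) : ℝ) = 0 :=
        Submodule.inner_right_of_mem_orthogonal u₀.2 (L u₀).2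
      have hpy := norm_add_sq_eq_norm_sq_add_norm_sq_real h0
      have hwsq : ‖w‖ ^ 2 = 1 + ‖L‖ ^ 2 := by
        have hnu : ‖(u₀ : EuclideanSpace ℝ (Fin d))‖ = 1 := by
          rw [← Submodule.coe_norm]; exact hu₀
        have hnL : ‖(L u₀ : EuclideanSpace ℝ (Fin d))‖ = ‖L‖ := by
          rw [← Submodule.coe_norm]; exact hval
        rw [hw_def, sq, sq, hpy, hnu, hnL]
        ring
      have hw_norm : ‖w‖ = c := by
        rw [hc_def, ← hwsq, Real.sqrt_sq (norm_nonneg w)]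
      set v : EuclideanSpace ℝ (Fin d) := c⁻¹ • w with hv_def
      have hv1 : ‖v‖ = 1 := by
        rw [hv_def, norm_smul, norm_inv, Real.norm_of_nonneg hc.le, hw_norm,
          inv_mul_cancel₀ hc.ne']
      have hvF : v ∈ F := F.smul_mem _ ((hF w).2 ⟨u₀, rfl⟩)
      have hdist : Metric.infDist v (E : Set (EuclideanSpace ℝ (Fin d))) = c⁻¹ * ‖L‖ := by
        have hv_split : v = c⁻¹ • (u₀ : EuclideanSpace ℝ (Fin d))
            + c⁻¹ • (L u₀ : EuclideanSpace ℝ (Fin d)) := by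
          rw [hv_def, hw_def, smul_add]
        rw [hv_split, infDist_add_of_orthogonal E (E.smul_mem _ u₀.2) (Eᗮ.smul_mem _ (L u₀).2),
          norm_smul, norm_inv, Real.norm_of_nonneg hc.le]
        congr 1
      have hmem2 : Metric.infDist v (E : Set (EuclideanSpace ℝ (Fin d))) ∈ S2 :=
        ⟨v, hvF, hv1, rfl⟩
      have hbdd : BddAbove S2 := ⟨‖L‖, fun r hr => hub2 r hr⟩
      have hle : Metric.infDist v (E : Set (EuclideanSpace ℝ (Fin d))) ≤ sSup S2 :=
        le_csSup hbdd hmem2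
      have : ‖L‖ / c = c⁻¹ * ‖L‖ := by rw [div_eq_inv_mul]
      calc ‖L‖ / c = c⁻¹ * ‖L‖ := this
        _ = Metric.infDist v (E : Set (EuclideanSpace ℝ (Fin d))) := hdist.symm
        _ ≤ sSup S2 := hle
        _ ≤ subDist E F := le_max_right _ _
  · exact max_le (Real.sSup_le hub1 hLnn) (Real.sSup_le hub2 hLnn)
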